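/- A planar triangle T with side lengths a, b, c is realizable with all vertices on the Eisenstein lattice if and only if: (i) the area of T is (√3/4)·n for some n ∈ ℕ; (ii) a², b², c² ∈ ℕ; and (iii) at least one side length has the form r√t with r, t ∈ ℕ and t having no prime divisor ≡ 2 (mod 3). -/

import Mathlib

noncomputable def ω : ℂ := (-1 + Real.sqrt 3 * Complex.I) / 2

def EisensteinLattice : Set ℂ := {z : ℂ | ∃ x y : ℤ, z = (x : ℂ) + (y : ℂ) * ω}



/-- Eisenstein integers `x + y ω`, `ω = e^{2πi/3}`. -/
@[ext] structure Eis where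
  x : ℤ
  y : ℤ
  deriving DecidableEq

namespace Eis

instance : Zero Eis := ⟨⟨0, 0⟩⟩
instance : One Eis := ⟨⟨1, 0⟩⟩
instance : Add Eis := ⟨fun a b => ⟨a.x + b.x, a.y + b.y⟩⟩
instance : Neg Eis := ⟨fun a => ⟨-a.x, -a.y⟩⟩
instance : Mul Eis := ⟨fun a b => ⟨a.x * b.x - a.y * b.y, a.x * b.y + a.y * b.x - a.y * b.y⟩⟩

@[simp] theorem zero_x : (0 : Eis).x = 0 := rfl
@[simp] theorem zero_y : (0 : Eis).y = 0 := rfl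
@[simp] theorem one_x : (1 : Eis).x = 1 := rfl
@[simp] theorem one_y : (1 : Eis).y = 0 := rfl
@[simp] theorem add_x (a b : Eis) : (a + b).x = a.x + b.x := rfl
@[simp] theorem add_y (a b : Eis) : (a + b).y = a.y + b.y := rfl
@[simp] theorem neg_x (a : Eis) : (-a).x = -a.x := rfl
@[simp] theorem neg_y (a : Eis) : (-a).y = -a.y := rfl
@[simp] theorem mul_x (a b : Eis) : (a * b).x = a.x * b.x - a.y * b.y := rfl
@[simp] theorem mul_y (a b : Eis) : (a * b).y = a.x * b.y + a.y * b.x - a.y * b.y := rfl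

instance commRing : CommRing Eis where
  add_assoc a b c := by ext <;> simp <;> ring
  zero_add a := by ext <;> simp
  add_zero a := by ext <;> simp
  add_comm a b := by ext <;> simp <;> ring
  left_distrib a b c := by ext <;> simp <;> ring
  right_distrib a b c := by ext <;> simp <;> ring
  zero_mul a := by ext <;> simp
  mul_zero a := by ext <;> simp
  mul_assoc a b c := by ext <;> simp <;> ring
  one_mul a := by ext <;> simp
  mul_one a := by ext <;> simp
  mul_comm a b := by ext <;> simp <;> ring
  neg_add_cancel a := by ext <;> simp
  nsmul := fun n a => ⟨n * a.x, n * a.y⟩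
  nsmul_zero a := by ext <;> simp [HSMul.hSMul, SMul.smul]
  nsmul_succ n a := by ext <;> simp [HSMul.hSMul, SMul.smul] <;> ring
  zsmul := fun n a => ⟨n * a.x, n * a.y⟩
  zsmul_zero' a := by ext <;> simp [HSMul.hSMul, SMul.smul]
  zsmul_succ' n a := by ext <;> simp [HSMul.hSMul, SMul.smul] <;> ring
  zsmul_neg' n a := by ext <;> simp [Int.negSucc_eq, HSMul.hSMul, SMul.smul] <;> ring
  natCast := fun n => ⟨n, 0⟩
  natCast_zero := by ext <;> simp
  natCast_succ n := by ext <;> simp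
  intCast := fun n => ⟨n, 0⟩
  intCast_ofNat n := by ext <;> rfl
  intCast_negSucc n := by
    ext
    · show Int.negSucc n = -((n + 1 : ℕ) : ℤ); push_cast [Int.negSucc_eq]; ring
    · show (0 : ℤ) = -0; ring

@[simp] theorem sub_x (a b : Eis) : (a - b).x = a.x - b.x := by
  simp [sub_eq_add_neg]
@[simp] theorem sub_y (a b : Eis) : (a - b).y = a.y - b.y := by
  simp [sub_eq_add_neg]

@[simp] theorem natCast_x (n : ℕ) : (n : Eis).x = n := rfl
@[simp] theorem natCast_y (n : ℕ) : (n : Eis).y = 0 := rfl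
@[simp] theorem intCast_x (n : ℤ) : (n : Eis).x = n := rfl
@[simp] theorem intCast_y (n : ℤ) : (n : Eis).y = 0 := rfl

end Eis
namespace Eis

/-- Complex conjugation on Eisenstein integers. -/
def conj (a : Eis) : Eis := ⟨a.x - a.y, -a.y⟩

@[simp] theorem conj_x (a : Eis) : (conj a).x = a.x - a.y := rfl
@[simp] theorem conj_y (a : Eis) : (conj a).y = -a.y := rfl

theorem conj_mul (a b : Eis) : conj (a * b) = conj a * conj b := by
  ext <;> simp <;> ring

@[simp] theorem conj_conj (a : Eis) : conj (conj a) = a := by ext <;> simp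

@[simp] theorem conj_natCast (n : ℕ) : conj (n : Eis) = n := by ext <;> simp

theorem conj_dvd {a b : Eis} (h : a ∣ b) : conj a ∣ conj b := by
  obtain ⟨c, rfl⟩ := h; exact ⟨conj c, conj_mul a c⟩

/-- The norm `x² - xy + y²`. -/
def norm (a : Eis) : ℤ := a.x ^ 2 - a.x * a.y + a.y ^ 2

theorem norm_mul (a b : Eis) : norm (a * b) = norm a * norm b := by
  simp [norm]; ring

theorem norm_nonneg (a : Eis) : 0 ≤ norm a := by
  have := sq_nonneg (2 * a.x - a.y); have := sq_nonneg a.y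
  simp [norm] at *; nlinarith

theorem norm_eq_zero_iff {a : Eis} : norm a = 0 ↔ a = 0 := by
  constructor
  · intro h
    simp only [norm] at h
    have h4 : (2 * a.x - a.y) ^ 2 + 3 * a.y ^ 2 = 0 := by linear_combination 4 * h
    have hy2 : a.y ^ 2 = 0 := by
      have := sq_nonneg (2 * a.x - a.y); have := sq_nonneg a.y; linarith
    have hy : a.y = 0 := by
      have := sq_eq_zero_iff.mp hy2; exact this
    have hx : a.x = 0 := by
      have hx2 : a.x ^ 2 = 0 := by rw [hy] at h; linarith
      exact sq_eq_zero_iff.mp hx2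
    ext <;> simp [hx, hy]
  · rintro rfl; simp [norm]

theorem mul_conj (a : Eis) : a * conj a = (norm a : Eis) := by
  ext <;> simp only [mul_x, mul_y, conj_x, conj_y, intCast_x, intCast_y, norm] <;> ring

@[simp] theorem norm_conj (a : Eis) : norm (conj a) = norm a := by simp [norm]; ring

@[simp] theorem norm_natCast (n : ℕ) : norm (n : Eis) = (n : ℤ) ^ 2 := by simp [norm]

@[simp] theorem norm_one : norm (1 : Eis) = 1 := by simp [norm]

instance : NoZeroDivisors Eis where
  eq_zero_or_eq_zero_of_mul_eq_zero {a b} h := by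
    have : norm a * norm b = 0 := by rw [← norm_mul, h]; simp [norm]
    rcases mul_eq_zero.1 this with h' | h'
    · exact Or.inl (norm_eq_zero_iff.1 h')
    · exact Or.inr (norm_eq_zero_iff.1 h')

instance : Nontrivial Eis := ⟨⟨0, 1, fun h => by simpa using congrArg Eis.x h⟩⟩

instance : IsDomain Eis := NoZeroDivisors.to_isDomain _

theorem norm_pos {a : Eis} (h : a ≠ 0) : 0 < norm a :=
  lt_of_le_of_ne (norm_nonneg a) (fun h' => h (norm_eq_zero_iff.1 h'.symm))

theorem norm_eq_one_of_isUnit {a : Eis} (h : IsUnit a) : norm a = 1 := by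
  obtain ⟨u, rfl⟩ := h
  have : norm (u : Eis) * norm ((u⁻¹ : Eisˣ) : Eis) = 1 := by
    rw [← norm_mul]; simp
  have h1 := norm_nonneg (u : Eis)
  exact Int.eq_one_of_mul_eq_one_right h1 this

theorem isUnit_of_norm_eq_one {a : Eis} (h : norm a = 1) : IsUnit a :=
  IsUnit.of_mul_eq_one (conj a) (by rw [mul_conj, h]; simp)

end Eis
namespace Eis

/-- Rounding quotient for the Euclidean algorithm. -/
def ediv (a b : Eis) : Eis :=
  let p := a * conj b
  let n := norm b
  ⟨round ((p.x : ℚ) / (n : ℚ)), round ((p.y : ℚ) / (n : ℚ))⟩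

theorem round_bound (X n : ℤ) (hn : 0 < n) : 2 * |X - n * round ((X : ℚ) / (n : ℚ))| ≤ n := by
  have hnq : (0 : ℚ) < (n : ℚ) := by exact_mod_cast hn
  have h := abs_sub_round ((X : ℚ) / (n : ℚ))
  have h2 : |(X : ℚ) - (n : ℚ) * round ((X : ℚ) / (n : ℚ))| ≤ (n : ℚ) / 2 := by
    have : (X : ℚ) - (n : ℚ) * round ((X : ℚ) / (n : ℚ))
        = (n : ℚ) * ((X : ℚ) / (n : ℚ) - round ((X : ℚ) / (n : ℚ))) := by
      field_simp
    rw [this, abs_mul, abs_of_pos hnq]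
    calc (n:ℚ) * |(X : ℚ) / (n : ℚ) - round ((X : ℚ) / (n : ℚ))| ≤ (n:ℚ) * (1/2) := by
          exact mul_le_mul_of_nonneg_left h (le_of_lt hnq)
      _ = (n:ℚ) / 2 := by ring
  have h3 : 2 * |(X : ℚ) - (n : ℚ) * round ((X : ℚ) / (n : ℚ))| ≤ (n : ℚ) := by linarith
  exact_mod_cast h3

theorem norm_ediv_remainder_lt (a : Eis) {b : Eis} (hb : b ≠ 0) :
    norm (a - b * ediv a b) < norm b := by
  set n := norm b with hn
  have hnpos : 0 < n := norm_pos hb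
  set p := a * conj b with hp
  set q := ediv a b with hq
  have hqx : q.x = round ((p.x : ℚ) / (n : ℚ)) := rfl
  have hqy : q.y = round ((p.y : ℚ) / (n : ℚ)) := rfl
  have hX : 2 * |p.x - n * q.x| ≤ n := by rw [hqx]; exact round_bound p.x n hnpos
  have hY : 2 * |p.y - n * q.y| ≤ n := by rw [hqy]; exact round_bound p.y n hnpos
  set X := p.x - n * q.x with hXdef
  set Y := p.y - n * q.y with hYdef
  -- (a - b*q) * conj b = p - n • q, with coordinates X Y
  have key : (a - b * q) * conj b = ⟨X, Y⟩ := by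
    have hbc : b * conj b = (n : Eis) := mul_conj b
    have : (a - b * q) * conj b = p - (n : Eis) * q := by
      rw [hp, sub_mul, mul_comm b q, mul_assoc, hbc]; ring
    rw [this]
    ext <;> simp only [hXdef, hYdef, sub_x, sub_y, mul_x, mul_y, intCast_x, intCast_y] <;> ring
  have hnormXY : norm ⟨X, Y⟩ < n * n := by
    have h1 : -n ≤ 2 * X ∧ 2 * X ≤ n := abs_le.mp (by rw [abs_mul]; simpa using hX)
    have h2 : -n ≤ 2 * Y ∧ 2 * Y ≤ n := abs_le.mp (by rw [abs_mul]; simpa using hY)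
    have : 4 * norm ⟨X, Y⟩ = (2 * X - Y) ^ 2 + 3 * Y ^ 2 := by simp [norm]; ring
    nlinarith [h1.1, h1.2, h2.1, h2.2, mul_nonneg (sub_nonneg.2 h1.2) (sub_nonneg.2 h2.2),
      mul_nonneg (sub_nonneg.2 h1.2) (add_nonneg (neg_le_iff_add_nonneg.mp h2.1) (le_refl 0)),
      sq_nonneg (2 * X - Y), sq_nonneg (2 * X + Y)]
  have heq : norm (a - b * q) * n = norm (⟨X, Y⟩ : Eis) := by
    rw [hn, ← norm_conj b, ← norm_mul, key]
  have : norm (a - b * q) * n < n * n := heq ▸ hnormXY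
  exact lt_of_mul_lt_mul_right this (le_of_lt hnpos)

instance euclideanDomain : EuclideanDomain Eis where
  quotient := ediv
  quotient_zero a := by
    ext <;> simp [ediv, norm] <;> simp [conj]
  remainder a b := a - b * ediv a b
  quotient_mul_add_remainder_eq a b := by ring
  r a b := (norm a).natAbs < (norm b).natAbs
  r_wellFounded := (measure fun a : Eis => (norm a).natAbs).wf
  remainder_lt a b hb := by
    exact Int.natAbs_lt_natAbs_of_nonneg_of_lt (norm_nonneg _) (norm_ediv_remainder_lt a hb)
  mul_left_not_lt a b hb := by
    have h1 : norm (a * b) = norm a * norm b := norm_mul a b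
    have hb1 : 1 ≤ norm b := norm_pos hb
    have h2 := norm_nonneg a
    simp only [not_lt]
    calc (norm a).natAbs = (norm a).natAbs * 1 := (mul_one _).symm
      _ ≤ (norm a).natAbs * (norm b).natAbs := by
          apply Nat.mul_le_mul_left
          omega
      _ = (norm (a * b)).natAbs := by rw [h1, Int.natAbs_mul]

end Eis
namespace Eis

theorem norm_mod_three (z : Eis) : norm z % 3 ≠ 2 := by
  intro h
  have hcast : ((norm z : ℤ) : ZMod 3) = ((2 : ℤ) : ZMod 3) := by
    rw [ZMod.intCast_eq_intCast_iff]
    show norm z % 3 = 2 % 3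
    omega
  have hz : ((norm z : ℤ) : ZMod 3) =
      (z.x : ZMod 3) ^ 2 - (z.x : ZMod 3) * (z.y : ZMod 3) + (z.y : ZMod 3) ^ 2 := by
    simp only [norm]; push_cast; ring
  have hall : ∀ u v : ZMod 3, u ^ 2 - u * v + v ^ 2 ≠ (2 : ZMod 3) := by decide
  exact hall _ _ (by rw [← hz, hcast]; norm_num)

theorem intCast_dvd_iff (p : ℤ) (z : Eis) : (p : Eis) ∣ z ↔ p ∣ z.x ∧ p ∣ z.y := by
  constructor
  · rintro ⟨w, rfl⟩
    exact ⟨⟨w.x, by simp⟩, ⟨w.y, by simp⟩⟩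
  · rintro ⟨⟨u, hu⟩, ⟨v, hv⟩⟩
    exact ⟨⟨u, v⟩, by ext <;> simp [hu, hv]⟩

theorem natCast_eq_intCast (p : ℕ) : ((p : ℕ) : Eis) = ((p : ℤ) : Eis) := by ext <;> simp

theorem natCast_dvd_iff (p : ℕ) (z : Eis) : (p : Eis) ∣ z ↔ (p:ℤ) ∣ z.x ∧ (p:ℤ) ∣ z.y := by
  rw [natCast_eq_intCast, intCast_dvd_iff]

theorem natAbs_norm_mul_eq {s t : Eis} {m : ℕ} (h : norm s * norm t = (m : ℤ)) :
    (norm s).natAbs * (norm t).natAbs = m := by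
  have := congrArg Int.natAbs h
  rwa [Int.natAbs_mul, Int.natAbs_natCast] at this

theorem nat_eq_one_of_mul_left {a b : ℕ} (ha : 0 < a) (h : a * b = a) : b = 1 :=
  Nat.eq_of_mul_eq_mul_left ha (by rw [h, mul_one])

theorem norm_eq_natAbs (s : Eis) : norm s = ((norm s).natAbs : ℤ) :=
  (Int.natAbs_of_nonneg (norm_nonneg s)).symm

/-- An element whose norm is a rational prime is prime. -/
theorem prime_of_norm_prime {p : ℕ} (hp : p.Prime) {u : Eis} (hu : norm u = p) :
    Prime u := by
  rw [← irreducible_iff_prime]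
  constructor
  · intro h
    have h1 := norm_eq_one_of_isUnit h
    rw [hu] at h1
    exact hp.one_lt.ne' (by exact_mod_cast h1)
  · intro s t hst
    have hnorm : norm s * norm t = (p : ℤ) := by rw [← norm_mul, ← hst, hu]
    have hmul := natAbs_norm_mul_eq hnorm
    rcases (Nat.Prime.eq_one_or_self_of_dvd hp _ ⟨_, hmul.symm⟩ : (norm s).natAbs = 1 ∨ _) with h1 | h1
    · left
      exact isUnit_of_norm_eq_one (by rw [norm_eq_natAbs, h1]; rfl)
    · right
      have h2 : (norm t).natAbs = 1 := by
        rw [h1] at hmul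
        exact nat_eq_one_of_mul_left hp.pos hmul
      exact isUnit_of_norm_eq_one (by rw [norm_eq_natAbs, h2]; rfl)

/-- Rational primes `≡ 2 (mod 3)` stay prime. -/
theorem prime_natCast_of_mod3_eq_two {p : ℕ} (hp : p.Prime) (h2 : p % 3 = 2) :
    Prime (p : Eis) := by
  rw [← irreducible_iff_prime]
  constructor
  · intro h
    have h1 := norm_eq_one_of_isUnit h
    rw [norm_natCast] at h1
    have hp2 : (2 : ℤ) ≤ (p : ℤ) := by exact_mod_cast hp.two_le
    nlinarith
  · intro s t hst
    have hnorm : norm s * norm t = ((p ^ 2 : ℕ) : ℤ) := by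
      rw [← norm_mul, ← hst, norm_natCast]; push_cast; ring
    have hmul := natAbs_norm_mul_eq hnorm
    have hdvd : (norm s).natAbs ∣ p ^ 2 := ⟨_, hmul.symm⟩
    obtain ⟨i, hi, hieq⟩ := (Nat.dvd_prime_pow hp).1 hdvd
    have hnot : (norm s).natAbs ≠ p := by
      intro hsp
      have : norm s % 3 = 2 := by
        rw [norm_eq_natAbs, hsp]
        omega
      exact norm_mod_three s this
    interval_cases i
    · left
      exact isUnit_of_norm_eq_one (by rw [norm_eq_natAbs, hieq]; rfl)
    · exact absurd (by simpa using hieq) hnot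
    · right
      have h2' : (norm t).natAbs = 1 := by
        rw [hieq] at hmul
        exact nat_eq_one_of_mul_left (pow_pos hp.pos 2) hmul
      exact isUnit_of_norm_eq_one (by rw [norm_eq_natAbs, h2']; rfl)

theorem exists_int_dvd_sq_add_self_add_one {p : ℕ} (hp : p.Prime) (h1 : p % 3 = 1) :
    ∃ g : ℤ, (p : ℤ) ∣ g ^ 2 + g + 1 := by
  haveI : Fact p.Prime := ⟨hp⟩
  obtain ⟨g, hg⟩ := IsCyclic.exists_ofOrder_eq_natCard (α := (ZMod p)ˣ)
  have hcard : Nat.card (ZMod p)ˣ = p - 1 := by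
    rw [Nat.card_eq_fintype_card, ZMod.card_units]
  have hdvd3 : 3 ∣ p - 1 := by
    have := hp.two_le; omega
  set k := (p - 1) / 3 with hk
  have hk3 : 3 * k = p - 1 := by omega
  have hp4 : 4 ≤ p := by
    have := hp.two_le
    omega
  set ζ := g ^ k with hζ
  have hζ3 : ζ ^ 3 = 1 := by
    rw [hζ, ← pow_mul, mul_comm, hk3, ← hcard, ← hg, pow_orderOf_eq_one]
  have hζ1 : ζ ≠ 1 := by
    intro h
    have : orderOf g ∣ k := orderOf_dvd_of_pow_eq_one h
    rw [hg, hcard] at this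
    have hkpos : 0 < k := by omega
    have := Nat.le_of_dvd hkpos this
    omega
  set z : ZMod p := (ζ : ZMod p) with hz
  have hz3 : z ^ 3 = 1 := by
    rw [hz, ← Units.val_pow_eq_pow_val, hζ3, Units.val_one]
  have hz1 : z ≠ 1 := fun h => hζ1 (Units.ext h)
  have hroot : z ^ 2 + z + 1 = 0 := by
    have hfactor : (z - 1) * (z ^ 2 + z + 1) = 0 := by
      have : (z - 1) * (z ^ 2 + z + 1) = z ^ 3 - 1 := by ring
      rw [this, hz3, sub_self]
    rcases mul_eq_zero.1 hfactor with h | h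
    · exact absurd (by linear_combination h : z = 1) hz1
    · exact h
  refine ⟨(z.val : ℤ), ?_⟩
  rw [← ZMod.intCast_zmod_eq_zero_iff_dvd]
  push_cast
  rw [ZMod.natCast_val, ZMod.cast_id]
  linear_combination hroot

/-- For `p = 3` or `p ≡ 1 (mod 3)`, there is an element of norm `p`. -/
theorem exists_norm_eq {p : ℕ} (hp : p.Prime) (h : p = 3 ∨ p % 3 = 1) :
    ∃ π : Eis, norm π = p := by
  rcases h with rfl | h1
  · exact ⟨⟨1, -1⟩, by simp [norm]⟩
  · obtain ⟨g, hg⟩ := exists_int_dvd_sq_add_self_add_one hp h1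
    set z : Eis := ⟨g, -1⟩ with hzdef
    have hnz : norm z = g ^ 2 + g + 1 := by simp only [norm, hzdef]; ring
    by_contra hno
    push_neg at hno
    -- p is prime in Eis would divide z or conj z
    have hirr : ¬ Irreducible (p : Eis) := by
      intro hirr
      have hpr : Prime (p : Eis) := (irreducible_iff_prime).1 hirr
      have hdvd : (p : Eis) ∣ z * conj z := by
        rw [mul_conj, hnz]
        rw [natCast_eq_intCast]
        exact_mod_cast (Int.castRingHom Eis).map_dvd hg
      have hpn : ¬ (p:ℤ) ∣ (-1 : ℤ) := by
        intro hd
        have := Int.le_of_dvd (by norm_num) (dvd_neg.mp  hd)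
        have := hp.two_le
        omega
      rcases hpr.2.2 _ _ hdvd with hd | hd
      · rw [natCast_dvd_iff] at hd
        exact hpn (by simpa [hzdef] using hd.2)
      · rw [natCast_dvd_iff] at hd
        exact hpn (by simpa [hzdef] using hd.2)
    rw [irreducible_iff] at hirr
    push_neg at hirr
    have hpnotunit : ¬ IsUnit (p : Eis) := by
      intro h
      have h1' := norm_eq_one_of_isUnit h
      rw [norm_natCast] at h1'
      have : (p : ℤ) ^ 2 = 1 := h1'
      have := hp.two_le
      nlinarith [this]
    obtain ⟨s, t, hst, hsu, htu⟩ := hirr hpnotunit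
    have hnorm : norm s * norm t = ((p ^ 2 : ℕ) : ℤ) := by
      rw [← norm_mul, ← hst, norm_natCast]; push_cast; ring
    have hmul := natAbs_norm_mul_eq hnorm
    have hdvd : (norm s).natAbs ∣ p ^ 2 := ⟨_, hmul.symm⟩
    obtain ⟨i, hi, hieq⟩ := (Nat.dvd_prime_pow hp).1 hdvd
    interval_cases i
    · exact hsu (isUnit_of_norm_eq_one (by rw [norm_eq_natAbs, hieq]; rfl))
    · exact hno s (by rw [norm_eq_natAbs, hieq]; push_cast; ring)
    · refine htu (isUnit_of_norm_eq_one ?_)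
      have h2' : (norm t).natAbs = 1 := by
        rw [hieq] at hmul
        exact nat_eq_one_of_mul_left (pow_pos hp.pos 2) hmul
      rw [norm_eq_natAbs, h2']; rfl

end Eis
namespace Eis

theorem natCast_dvd_norm_mul_conj {p : ℕ} {w : Eis} (h : (p : ℤ) ∣ norm w) :
    (p : Eis) ∣ w * conj w := by
  rw [mul_conj, natCast_eq_intCast]
  exact_mod_cast (Int.castRingHom Eis).map_dvd h

/-- If a prime `p ≡ 2 (mod 3)` divides the norm of `w`, then `p ∣ w`. -/
theorem natCast_dvd_of_dvd_norm {p : ℕ} (hp : p.Prime) (h2 : p % 3 = 2) {w : Eis}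
    (h : (p : ℤ) ∣ norm w) : (p : Eis) ∣ w := by
  have hpr := prime_natCast_of_mod3_eq_two hp h2
  rcases hpr.2.2 _ _ (natCast_dvd_norm_mul_conj h) with hd | hd
  · exact hd
  · have := conj_dvd hd
    rwa [conj_natCast, conj_conj] at this

/-- Main construction lemma: if `m` divides `norm w` and every prime `≡ 2 (mod 3)`
occurs to an even power in `m`, then `w` has a divisor of norm `m`. -/
theorem exists_divisor_of_norm :
    ∀ m : ℕ, 0 < m →
    (∀ p : ℕ, p.Prime → p % 3 = 2 → Even (m.factorization p)) →
    ∀ w : Eis, (m : ℤ) ∣ norm w → ∃ u : Eis, u ∣ w ∧ norm u = m := by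
  intro m
  induction m using Nat.strong_induction_on with
  | _ m ih =>
    intro hm hgood w hdvd
    rcases eq_or_lt_of_le (show 1 ≤ m from hm) with h1 | h1
    · exact ⟨1, one_dvd w, by rw [← h1]; simp⟩
    set p := m.minFac with hpdef
    have hp : p.Prime := Nat.minFac_prime (by omega)
    have hpm : p ∣ m := Nat.minFac_dvd m
    have hm0 : m ≠ 0 := by omega
    by_cases h2 : p % 3 = 2
    · -- inert prime case
      have hfac : Even (m.factorization p) := hgood p hp h2
      have hfac1 : 1 ≤ m.factorization p :=
        (Nat.Prime.factorization_pos_of_dvd hp hm0 hpm)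
      have hfac2 : 2 ≤ m.factorization p := by
        rcases hfac with ⟨k, hk⟩; omega
      have hp2 : p ^ 2 ∣ m := (Nat.Prime.pow_dvd_iff_le_factorization hp hm0).2 hfac2
      obtain ⟨m', hm'⟩ := id hp2
      have hpEw : (p : Eis) ∣ w := by
        apply natCast_dvd_of_dvd_norm hp h2
        exact dvd_trans (Int.natCast_dvd_natCast.2 hpm) hdvd
      obtain ⟨w', hw'⟩ := hpEw
      have hnw : norm w = (p : ℤ) ^ 2 * norm w' := by
        rw [hw', norm_mul, norm_natCast]
      have hm'pos : 0 < m' := by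
        rcases Nat.eq_zero_or_pos m' with h | h
        · rw [h, mul_zero] at hm'; omega
        · exact h
      have hm'lt : m' < m := by
        have hp1 : 1 < p ^ 2 := by nlinarith [hp.two_le]
        calc m' < p ^ 2 * m' := by nlinarith
          _ = m := hm'.symm
      have hdvd' : (m' : ℤ) ∣ norm w' := by
        have : ((p ^ 2 * m' : ℕ) : ℤ) ∣ (p : ℤ) ^ 2 * norm w' := by
          rw [← hm', ← hnw]; exact hdvd
        have h' : (p : ℤ) ^ 2 * (m' : ℤ) ∣ (p : ℤ) ^ 2 * norm w' := by
          push_cast at this ⊢; exact this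
        exact (mul_dvd_mul_iff_left (pow_ne_zero 2 (by exact_mod_cast hp.pos.ne' : (p:ℤ) ≠ 0))).1 h'
      have hgood' : ∀ q : ℕ, q.Prime → q % 3 = 2 → Even (m'.factorization q) := by
        intro q hq hq2
        have hsplit : m.factorization q = (p ^ 2).factorization q + m'.factorization q := by
          rw [hm', Nat.factorization_mul (pow_ne_zero 2 hp.pos.ne') hm'pos.ne']
          simp
        have hpow : (p ^ 2).factorization q = if q = p then 2 else 0 := by
          rw [hp.factorization_pow, Finsupp.single_apply]
          simp [eq_comm]
        by_cases hqp : q = p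
        · rw [hpow, if_pos hqp] at hsplit
          rcases hgood q hq hq2 with ⟨k, hk⟩
          exact ⟨k - 1, by omega⟩
        · rw [hpow, if_neg hqp] at hsplit
          rw [← Nat.zero_add (m'.factorization q), ← hsplit]
          exact hgood q hq hq2
      obtain ⟨u', hu'w, hu'n⟩ := ih m' hm'lt hm'pos hgood' w' hdvd'
      refine ⟨(p : Eis) * u', mul_dvd_mul_left _ hu'w |>.trans (by rw [hw']), ?_⟩
      rw [norm_mul, norm_natCast, hu'n, hm']
      push_cast; ring
    · -- split prime case
      have hgood3 : p = 3 ∨ p % 3 = 1 := by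
        have hcase : p % 3 = 0 ∨ p % 3 = 1 := by omega
        rcases hcase with h | h
        · left
          have h3 : 3 ∣ p := Nat.dvd_of_mod_eq_zero h
          exact ((Nat.prime_dvd_prime_iff_eq Nat.prime_three hp).1 h3).symm
        · right; exact h
      obtain ⟨π, hπ⟩ := exists_norm_eq hp hgood3
      have hπprime : Prime π := prime_of_norm_prime hp hπ
      have hπp : π ∣ (p : Eis) := by
        refine ⟨conj π, ?_⟩
        rw [mul_conj, hπ, natCast_eq_intCast]
      have hπ0 : ∃ π₀ : Eis, norm π₀ = p ∧ π₀ ∣ w := by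
        have hd : (p : ℤ) ∣ norm w := dvd_trans (by exact_mod_cast Int.natCast_dvd_natCast.2 hpm) hdvd
        rcases hπprime.2.2 _ _ (dvd_trans hπp (natCast_dvd_norm_mul_conj hd)) with hd' | hd'
        · exact ⟨π, hπ, hd'⟩
        · refine ⟨conj π, by rw [norm_conj]; exact hπ, ?_⟩
          have := conj_dvd hd'
          rwa [conj_conj] at this
      obtain ⟨π₀, hπ₀n, hπ₀w⟩ := hπ0
      obtain ⟨w', hw'⟩ := hπ₀w
      have hnw : norm w = (p : ℤ) * norm w' := by rw [hw', norm_mul, hπ₀n]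
      obtain ⟨m', hm'⟩ := id hpm
      have hm'pos : 0 < m' := by
        rcases Nat.eq_zero_or_pos m' with h | h
        · rw [h, mul_zero] at hm'; omega
        · exact h
      have hm'lt : m' < m := by
        have := hp.two_le; nlinarith
      have hdvd' : (m' : ℤ) ∣ norm w' := by
        have h' : (p : ℤ) * (m' : ℤ) ∣ (p : ℤ) * norm w' := by
          rw [← hnw]; exact_mod_cast (by rw [← hm']; exact hdvd : ((p * m' : ℕ) : ℤ) ∣ norm w)
        exact (mul_dvd_mul_iff_left (by exact_mod_cast hp.pos.ne' : (p:ℤ) ≠ 0)).1 h'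
      have hgood' : ∀ q : ℕ, q.Prime → q % 3 = 2 → Even (m'.factorization q) := by
        intro q hq hq2
        have hqp : q ≠ p := by
          intro h; subst h
          rcases hgood3 with h | h <;> omega
        have hsplit : m.factorization q = p.factorization q + m'.factorization q := by
          rw [hm', Nat.factorization_mul hp.pos.ne' hm'pos.ne']
          simp
        have hpow : p.factorization q = 0 := by
          rw [hp.factorization, Finsupp.single_apply, if_neg (fun h => hqp h.symm)]
        rw [hpow, Nat.zero_add] at hsplit
        rw [← hsplit]
        exact hgood q hq hq2
      obtain ⟨u', hu'w, hu'n⟩ := ih m' hm'lt hm'pos hgood' w' hdvd'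
      refine ⟨π₀ * u', mul_dvd_mul_left _ hu'w |>.trans (by rw [hw']), ?_⟩
      rw [norm_mul, hπ₀n, hu'n, hm']
      push_cast; ring

/-- Forward lemma: the norm of an Eisenstein integer is `r² t` with `t` free of
primes `≡ 2 (mod 3)`. -/
theorem exists_sq_mul_norm (z : Eis) :
    ∃ r t : ℕ, (norm z).toNat = r ^ 2 * t ∧ ∀ p : ℕ, p.Prime → p % 3 = 2 → ¬ p ∣ t := by
  generalize hN : (norm z).toNat = N
  induction N using Nat.strong_induction_on generalizing z with
  | _ N ih =>
    by_cases hz : z = 0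
    · subst hz
      refine ⟨0, 1, ?_, fun p hp _ hdvd => hp.one_lt.ne' (Nat.eq_one_of_dvd_one hdvd) ⟩
      simp [norm] at hN
      omega
    by_cases hbad : ∃ p : ℕ, p.Prime ∧ p % 3 = 2 ∧ p ∣ N
    · obtain ⟨p, hp, h2, hpN⟩ := hbad
      have hNormz : norm z = (N : ℤ) := by rw [← hN, Int.toNat_of_nonneg (norm_nonneg z)]
      have hpz : (p : Eis) ∣ z := by
        apply natCast_dvd_of_dvd_norm hp h2
        rw [hNormz]; exact_mod_cast Int.natCast_dvd_natCast.2 hpN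
      obtain ⟨z', hz'⟩ := hpz
      have hnz : norm z = (p : ℤ) ^ 2 * norm z' := by rw [hz', norm_mul, norm_natCast]
      have hz'0 : z' ≠ 0 := by
        rintro rfl; rw [mul_zero] at hz'; exact hz hz'
      set N' := (norm z').toNat with hN'
      have hNN' : N = p ^ 2 * N' := by
        have h1 : (N : ℤ) = (p:ℤ) ^ 2 * (N' : ℤ) := by
          rw [← hNormz, hnz, hN', Int.toNat_of_nonneg (norm_nonneg z')]
        exact_mod_cast h1
      have hN'pos : 0 < N' := by
        have := norm_pos hz'0
        omega
      have hN'lt : N' < N := by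
        have h4 : 4 * N' ≤ p ^ 2 * N' := Nat.mul_le_mul_right N' (by nlinarith [hp.two_le])
        omega
      obtain ⟨r', t', ht', hgood'⟩ := ih N' hN'lt z' rfl
      exact ⟨p * r', t', by rw [hNN', ht']; ring, hgood'⟩
    · push_neg at hbad
      exact ⟨1, N, by ring, fun p hp h2 => hbad p hp h2⟩

end Eis
namespace Eis

theorem sqrt3_mul_self : Real.sqrt 3 * Real.sqrt 3 = 3 :=
  Real.mul_self_sqrt (by norm_num)

theorem omega_sq : ω ^ 2 = -1 - ω := by
  have h3 : ((Real.sqrt 3 : ℝ) : ℂ) * ((Real.sqrt 3 : ℝ) : ℂ) = 3 := by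
    rw [← Complex.ofReal_mul, sqrt3_mul_self]; norm_num
  have key : ((Real.sqrt 3 : ℝ) : ℂ) * ((Real.sqrt 3 : ℝ) : ℂ) * (Complex.I * Complex.I) = -3 := by
    rw [h3, Complex.I_mul_I]; ring
  rw [ω]
  field_simp
  linear_combination key

/-- The embedding of `Eis` into `ℂ`. -/
noncomputable def toC (e : Eis) : ℂ := (e.x : ℂ) + (e.y : ℂ) * ω

theorem mem_lattice_iff {z : ℂ} : z ∈ EisensteinLattice ↔ ∃ e : Eis, toC e = z :=
  ⟨fun ⟨x, y, h⟩ => ⟨⟨x, y⟩, h.symm⟩, fun ⟨e, h⟩ => ⟨e.x, e.y, h.symm⟩⟩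

theorem toC_zero : toC (0 : Eis) = 0 := by
  simp only [toC, zero_x, zero_y, Int.cast_zero, zero_mul, add_zero]

theorem toC_sub (e f : Eis) : toC (e - f) = toC e - toC f := by
  simp only [toC, sub_x, sub_y]; push_cast; ring

theorem toC_mul (e f : Eis) : toC (e * f) = toC e * toC f := by
  simp only [toC, mul_x, mul_y]
  push_cast
  linear_combination (-(e.y : ℂ) * (f.y : ℂ)) * (by linear_combination omega_sq : ω ^ 2 + ω + 1 = 0)

theorem toC_re (e : Eis) : (toC e).re = (e.x : ℝ) - (e.y : ℝ) / 2 := by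
  simp [toC, ω]
  ring

theorem toC_im (e : Eis) : (toC e).im = (e.y : ℝ) * (Real.sqrt 3 / 2) := by
  simp [toC, ω]

theorem normSq_toC (e : Eis) : Complex.normSq (toC e) = (norm e : ℝ) := by
  rw [Complex.normSq_apply, toC_re, toC_im]
  have h3 := sqrt3_mul_self
  simp only [norm]
  push_cast
  linear_combination ((e.y : ℝ) ^ 2 / 4) * h3

theorem conj_omega : (starRingEnd ℂ) ω = -1 - ω := by
  simp only [ω, map_div₀, map_add, map_mul, map_neg, map_one, Complex.conj_I,
    Complex.conj_ofReal, map_ofNat]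
  ring

theorem toC_conj (e : Eis) : toC (conj e) = (starRingEnd ℂ) (toC e) := by
  simp only [toC, conj_x, conj_y, map_add, map_mul, conj_omega, map_intCast]
  push_cast
  ring

theorem dist_toC_sq (e f : Eis) : dist (toC e) (toC f) ^ 2 = ((norm (e - f) : ℤ) : ℝ) := by
  rw [Complex.dist_eq, ← toC_sub, Complex.sq_norm, normSq_toC]

end Eis
namespace Eis

theorem norm_sub_eq (s t : Eis) :
    norm (s - t) = norm s + norm t - ((s * conj t).x * 2 - (s * conj t).y) := by
  simp only [norm, sub_x, sub_y, mul_x, mul_y, conj_x, conj_y]; ring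

theorem gram (u v : Eis) :
    4 * norm v * norm u - (norm v + norm u - norm (v - u)) ^ 2
      = 3 * (u.y * v.x - u.x * v.y) ^ 2 := by
  simp only [norm, sub_x, sub_y]; ring

end Eis

theorem Eis.cast_toNat_norm (z : Eis) : (((Eis.norm z).toNat : ℕ) : ℝ) = ((Eis.norm z : ℤ) : ℝ) := by
  exact_mod_cast congrArg (fun i : ℤ => (i : ℝ)) (Int.toNat_of_nonneg (Eis.norm_nonneg z))

theorem eq_of_sq_eq_sq' {x y : ℝ} (hx : 0 ≤ x) (hy : 0 ≤ y) (h : x ^ 2 = y ^ 2) : x = y := by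
  rw [← Real.sqrt_sq hx, h, Real.sqrt_sq hy]

theorem sqrt3_term_sq (n : ℝ) : 16 * (Real.sqrt 3 / 4 * n) ^ 2 = 3 * n ^ 2 := by
  have h3 := Eis.sqrt3_mul_self
  nlinarith [h3]

/-- Forward direction. -/
theorem eis_forward {a b c : ℝ} (ha : 0 < a) (hb : 0 < b) (hc : 0 < c)
    {A B C : ℂ} (hA : A ∈ EisensteinLattice) (hB : B ∈ EisensteinLattice)
    (hC : C ∈ EisensteinLattice)
    (da : dist B C = a) (db : dist A C = b) (dc : dist A B = c) :
    ((∃ n : ℕ, 16 * (Real.sqrt 3 / 4 * n) ^ 2 =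
        (a + b + c) * (a + b - c) * (a - b + c) * (-a + b + c)) ∧
     (∃ A B C : ℕ, a ^ 2 = (A : ℝ) ∧ b ^ 2 = (B : ℝ) ∧ c ^ 2 = (C : ℝ)) ∧
     (∃ s ∈ ({a, b, c} : Set ℝ), ∃ r t : ℕ, s = (r : ℝ) * Real.sqrt t ∧
        ∀ p : ℕ, p.Prime → p % 3 = 2 → ¬ p ∣ t)) := by
  obtain ⟨eA, rfl⟩ := Eis.mem_lattice_iff.1 hA
  obtain ⟨eB, rfl⟩ := Eis.mem_lattice_iff.1 hB
  obtain ⟨eC, rfl⟩ := Eis.mem_lattice_iff.1 hC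
  set u := eA - eB with hu
  set v := eA - eC with hv
  have hc2 : c ^ 2 = ((Eis.norm u : ℤ) : ℝ) := by
    rw [← dc, Eis.dist_toC_sq]
  have hb2 : b ^ 2 = ((Eis.norm v : ℤ) : ℝ) := by
    rw [← db, Eis.dist_toC_sq]
  have ha2 : a ^ 2 = ((Eis.norm (v - u) : ℤ) : ℝ) := by
    rw [← da, show v - u = eB - eC by rw [hu, hv]; ring, Eis.dist_toC_sq]
  refine ⟨?_, ?_, ?_⟩
  · -- Heron condition
    set d : ℤ := u.y * v.x - u.x * v.y with hd
    refine ⟨d.natAbs, ?_⟩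
    rw [sqrt3_term_sq]
    have hg := Eis.gram u v
    have hgR : 4 * ((Eis.norm v : ℤ) : ℝ) * ((Eis.norm u : ℤ) : ℝ)
        - (((Eis.norm v : ℤ) : ℝ) + ((Eis.norm u : ℤ) : ℝ) - ((Eis.norm (v - u) : ℤ) : ℝ)) ^ 2
        = 3 * ((u.y : ℝ) * (v.x : ℝ) - (u.x : ℝ) * (v.y : ℝ)) ^ 2 := by
      exact_mod_cast congrArg (fun z : ℤ => (z : ℝ)) hg
    have hd1 : ((d : ℤ) : ℝ) = (u.y : ℝ) * (v.x : ℝ) - (u.x : ℝ) * (v.y : ℝ) := by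
      rw [hd]; push_cast; ring
    have habs : ((d.natAbs : ℕ) : ℝ) ^ 2 = ((u.y : ℝ) * (v.x : ℝ) - (u.x : ℝ) * (v.y : ℝ)) ^ 2 := by
      rw [← hd1]
      have h5 : ((d.natAbs : ℕ) : ℝ) = |(d : ℝ)| := by
        rw [Nat.cast_natAbs, Int.cast_abs]
      rw [h5, sq_abs]
    have hh : (a + b + c) * (a + b - c) * (a - b + c) * (-a + b + c)
        = 4 * b ^ 2 * c ^ 2 - (b ^ 2 + c ^ 2 - a ^ 2) ^ 2 := by ring
    rw [hh, hb2, hc2, ha2, habs]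
    linarith [hgR]
  · exact ⟨(Eis.norm (v - u)).toNat, (Eis.norm v).toNat, (Eis.norm u).toNat,
      by rw [ha2, Eis.cast_toNat_norm], by rw [hb2, Eis.cast_toNat_norm],
      by rw [hc2, Eis.cast_toNat_norm]⟩
  · obtain ⟨r, t, hrt, hgood⟩ := Eis.exists_sq_mul_norm (v - u)
    refine ⟨a, by simp, r, t, ?_, hgood⟩
    have h0 : a = Real.sqrt (a ^ 2) := (Real.sqrt_sq ha.le).symm
    rw [h0, ha2, ← Eis.cast_toNat_norm, hrt]
    push_cast
    rw [Real.sqrt_mul (by positivity : (0:ℝ) ≤ (r:ℝ) ^ 2), Real.sqrt_sq (by positivity)]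

/-- Backward construction: note the "good" side is `c`. -/
theorem eis_backward {a b c : ℝ} (ha : 0 < a) (hb : 0 < b) (hc : 0 < c)
    (A' B' C' : ℕ) (ha2 : a ^ 2 = (A' : ℝ)) (hb2 : b ^ 2 = (B' : ℝ)) (hc2 : c ^ 2 = (C' : ℝ))
    (n : ℕ) (hn : 16 * (Real.sqrt 3 / 4 * n) ^ 2 =
        (a + b + c) * (a + b - c) * (a - b + c) * (-a + b + c))
    (r t : ℕ) (hrt : c = (r : ℝ) * Real.sqrt t)
    (hgood : ∀ p : ℕ, p.Prime → p % 3 = 2 → ¬ p ∣ t) :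
    ∃ A B C : ℂ, A ∈ EisensteinLattice ∧ B ∈ EisensteinLattice ∧ C ∈ EisensteinLattice ∧
      dist B C = a ∧ dist A C = b ∧ dist A B = c := by
  set k : ℤ := (B' : ℤ) + (C' : ℤ) - (A' : ℤ) with hkdef
  have hk : 3 * (n : ℤ) ^ 2 = 4 * (B' : ℤ) * (C' : ℤ) - k ^ 2 := by
    have h1 : (3 : ℝ) * (n : ℝ) ^ 2 = 4 * (B' : ℝ) * (C' : ℝ) - ((k : ℤ) : ℝ) ^ 2 := by
      rw [← sqrt3_term_sq, hn]
      push_cast [hkdef]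
      rw [← ha2, ← hb2, ← hc2]
      ring
    exact_mod_cast h1
  have heven : Even (k + (n : ℤ)) := by
    have h1 : Even (k ^ 2 + (n : ℤ) ^ 2) :=
      ⟨2 * (B' : ℤ) * (C' : ℤ) - (n : ℤ) ^ 2, by linarith⟩
    have h2 := (Int.even_add).1 h1
    rw [Int.even_pow' (by norm_num), Int.even_pow' (by norm_num)] at h2
    rw [Int.even_add]
    exact h2
  obtain ⟨j, hj⟩ := heven
  set w : Eis := ⟨j, n⟩ with hwdef
  have hwx : w.x = j := rfl
  have hwy : w.y = (n : ℤ) := rfl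
  have hw : Eis.norm w = (B' : ℤ) * (C' : ℤ) := by
    have h4 : 4 * Eis.norm w = 4 * ((B' : ℤ) * (C' : ℤ)) := by
      simp only [Eis.norm, hwx, hwy]
      linear_combination hk - (2 * j - (n : ℤ) + k) * hj
    linarith
  have hC'pos : 0 < C' := by
    rcases Nat.eq_zero_or_pos C' with h | h
    · exfalso
      rw [h] at hc2
      simp at hc2
      exact hc.ne' hc2
    · exact h
  have ht0 : t ≠ 0 := by
    rintro rfl
    rw [Nat.cast_zero, Real.sqrt_zero, mul_zero] at hrt
    exact hc.ne' hrt
  have hr0 : r ≠ 0 := by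
    rintro rfl
    rw [Nat.cast_zero, zero_mul] at hrt
    exact hc.ne' hrt
  have hC'rt : C' = r ^ 2 * t := by
    have h1 : ((C' : ℕ) : ℝ) = ((r ^ 2 * t : ℕ) : ℝ) := by
      rw [← hc2, hrt]
      push_cast
      rw [mul_pow, Real.sq_sqrt (by positivity : (0:ℝ) ≤ (t:ℝ))]
    exact_mod_cast h1
  have hgoodC' : ∀ p : ℕ, p.Prime → p % 3 = 2 → Even (C'.factorization p) := by
    intro p hp h2
    rw [hC'rt, Nat.factorization_mul (pow_ne_zero 2 hr0) ht0]
    simp only [Finsupp.coe_add, Pi.add_apply]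
    rw [Nat.factorization_pow]
    simp only [Finsupp.smul_apply, smul_eq_mul]
    rw [Nat.factorization_eq_zero_of_not_dvd (hgood p hp h2)]
    exact ⟨r.factorization p, by ring⟩
  have hdvd : ((C' : ℕ) : ℤ) ∣ Eis.norm w := ⟨(B' : ℤ), by rw [hw]; ring⟩
  obtain ⟨u, huw, hun⟩ := Eis.exists_divisor_of_norm C' hC'pos hgoodC' w hdvd
  obtain ⟨zC, hzC⟩ := huw
  set zB := Eis.conj u with hzB
  refine ⟨0, Eis.toC zB, Eis.toC zC, ?_, ?_, ?_, ?_, ?_, ?_⟩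
  · exact Eis.mem_lattice_iff.2 ⟨0, Eis.toC_zero⟩
  · exact Eis.mem_lattice_iff.2 ⟨zB, rfl⟩
  · exact Eis.mem_lattice_iff.2 ⟨zC, rfl⟩
  · -- dist B C = a
    have hq : zB * Eis.conj zC = Eis.conj w := by
      rw [hzB, ← Eis.conj_mul, ← hzC]
    have hnorm : Eis.norm (zB - zC) = (A' : ℤ) := by
      have hnzB : Eis.norm zB = (C' : ℤ) := by rw [hzB, Eis.norm_conj, hun]
      have hnzC : Eis.norm zC = (B' : ℤ) := by
        have h1 : Eis.norm u * Eis.norm zC = (B' : ℤ) * (C' : ℤ) := by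
          rw [← Eis.norm_mul, ← hzC, hw]
        rw [hun] at h1
        have hC0 : ((C' : ℕ) : ℤ) ≠ 0 := by exact_mod_cast hC'pos.ne'
        exact mul_right_cancel₀ hC0 (by linear_combination h1)
      rw [Eis.norm_sub_eq, hnzB, hnzC, hq]
      have h1 : (Eis.conj w).x = j - (n : ℤ) := by rw [Eis.conj_x]
      have h2 : (Eis.conj w).y = -(n : ℤ) := by rw [Eis.conj_y]
      rw [h1, h2]
      omega
    apply eq_of_sq_eq_sq' dist_nonneg ha.le
    rw [Eis.dist_toC_sq, hnorm, ha2]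
    norm_num
  · -- dist A C = b
    have hnzC : Eis.norm zC = (B' : ℤ) := by
      have h1 : Eis.norm u * Eis.norm zC = (B' : ℤ) * (C' : ℤ) := by
        rw [← Eis.norm_mul, ← hzC, hw]
      rw [hun] at h1
      have hC0 : ((C' : ℕ) : ℤ) ≠ 0 := by exact_mod_cast hC'pos.ne'
      exact mul_right_cancel₀ hC0 (by linarith [h1])
    apply eq_of_sq_eq_sq' dist_nonneg hb.le
    rw [← Eis.toC_zero, Eis.dist_toC_sq, zero_sub,
      show Eis.norm (-zC) = Eis.norm zC by simp only [Eis.norm, Eis.neg_x, Eis.neg_y]; ring,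
      hnzC, hb2]
    norm_cast
  · -- dist A B = c
    apply eq_of_sq_eq_sq' dist_nonneg hc.le
    rw [← Eis.toC_zero, Eis.dist_toC_sq, zero_sub,
      show Eis.norm (-zB) = Eis.norm zB by simp only [Eis.norm, Eis.neg_x, Eis.neg_y]; ring,
      hzB, Eis.norm_conj, hun, hc2]
    norm_cast

theorem stmt_14 (a b c : ℝ) (ha : 0 < a) (hb : 0 < b) (hc : 0 < c)
    (hab : c < a + b) (hbc : a < b + c) (hac : b < a + c) :
    (∃ A B C : ℂ, A ∈ EisensteinLattice ∧ B ∈ EisensteinLattice ∧ C ∈ EisensteinLattice ∧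
      dist B C = a ∧ dist A C = b ∧ dist A B = c) ↔
    ((∃ n : ℕ, 16 * (Real.sqrt 3 / 4 * n) ^ 2 =
        (a + b + c) * (a + b - c) * (a - b + c) * (-a + b + c)) ∧
     (∃ A B C : ℕ, a ^ 2 = (A : ℝ) ∧ b ^ 2 = (B : ℝ) ∧ c ^ 2 = (C : ℝ)) ∧
     (∃ s ∈ ({a, b, c} : Set ℝ), ∃ r t : ℕ, s = (r : ℝ) * Real.sqrt t ∧
        ∀ p : ℕ, p.Prime → p % 3 = 2 → ¬ p ∣ t)) := by
  constructor
  · rintro ⟨A, B, C, hA, hB, hC, da, db, dc⟩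
    exact eis_forward ha hb hc hA hB hC da db dc
  · rintro ⟨⟨n, hn⟩, ⟨A', B', C', ha2, hb2, hc2⟩, s, hs, r, t, hst, hgood⟩
    simp only [Set.mem_insert_iff, Set.mem_singleton_iff] at hs
    rcases hs with h | h | h
    · -- the good side is a
      rw [h] at hst
      obtain ⟨P, Q, R, hP, hQ, hR, d1, d2, d3⟩ :=
        eis_backward hc hb ha C' B' A' hc2 hb2 ha2 n
          (by rw [show (c + b + a) * (c + b - a) * (c - b + a) * (-c + b + a)
              = (a + b + c) * (a + b - c) * (a - b + c) * (-a + b + c) from by ring]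
              exact hn) r t hst hgood
      exact ⟨R, Q, P, hR, hQ, hP, by rwa [dist_comm], by rwa [dist_comm], by rwa [dist_comm]⟩
    · -- the good side is b
      rw [h] at hst
      obtain ⟨P, Q, R, hP, hQ, hR, d1, d2, d3⟩ :=
        eis_backward ha hc hb A' C' B' ha2 hc2 hb2 n
          (by rw [show (a + c + b) * (a + c - b) * (a - c + b) * (-a + c + b)
              = (a + b + c) * (a + b - c) * (a - b + c) * (-a + b + c) from by ring]
              exact hn) r t hst hgood
      exact ⟨P, R, Q, hP, hR, hQ, by rwa [dist_comm], d3, d2⟩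
    · -- the good side is c
      rw [h] at hst
      obtain ⟨P, Q, R, hP, hQ, hR, d1, d2, d3⟩ :=
        eis_backward ha hb hc A' B' C' ha2 hb2 hc2 n hn r t hst hgood
      exact ⟨P, Q, R, hP, hQ, hR, d1, d2, d3⟩
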